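/- Let f : ℝⁿ → ℝⁿ be continuously differentiable with Jacobian Df(x), let λ > 0, ε > 0, and let P be a real symmetric n×n matrix such that Df(x)ᵀP + P·Df(x) ⪯ −2λP − εI for all x ∈ ℝⁿ. If a, b ∈ ℝⁿ are equilibria, f(a) = 0 and f(b) = 0, with a ≠ b, then (a−b)ᵀP(a−b) ≤ −(ε/(2λ))·|a−b|² < 0; in particular any two distinct equilibria lie in the interior of the cone K⁻ = { z : zᵀPz ≤ 0 } relative to each other. -/

import Mathlib

open Matrix

/-- `M ⪯ N` iff `N - M` is positive semidefinite. -/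
def matLE {m : Type*} [Fintype m] (M N : Matrix m m ℝ) : Prop := (N - M).PosSemidef

/-- A real symmetric matrix has inertia `p`: exactly `p` negative eigenvalues,
`card m − p` positive eigenvalues, and no zero eigenvalues, counted with multiplicity
(as roots of the characteristic polynomial). -/
def hasInertia {m : Type*} [Fintype m] [DecidableEq m]
    (P : Matrix m m ℝ) (p : ℕ) : Prop :=
  Multiset.countP (fun μ : ℝ => μ < 0) P.charpoly.roots = p ∧
  Multiset.countP (fun μ : ℝ => 0 < μ) P.charpoly.roots = Fintype.card m - p ∧
  (0 : ℝ) ∉ P.charpoly.roots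

/-- Number of complex eigenvalues (with algebraic multiplicity) of a real matrix
with strictly positive real part. -/
noncomputable def posReCount {m : Type*} [Fintype m] [DecidableEq m]
    (A : Matrix m m ℝ) : ℕ :=
  Multiset.countP (fun μ : ℂ => 0 < μ.re) (A.map Complex.ofReal).charpoly.roots

/-- Number of complex eigenvalues (with algebraic multiplicity) of a real matrix
with strictly negative real part. -/
noncomputable def negReCount {m : Type*} [Fintype m] [DecidableEq m]
    (A : Matrix m m ℝ) : ℕ :=
  Multiset.countP (fun μ : ℂ => μ.re < 0) (A.map Complex.ofReal).charpoly.roots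

/-- The quadratic form `xᵀ P x`. -/
def quadForm {m : Type*} [Fintype m] (P : Matrix m m ℝ) (x : m → ℝ) : ℝ :=
  x ⬝ᵥ P.mulVec x

/-- Euclidean norm on `m → ℝ`. -/
noncomputable def enorm {m : Type*} [Fintype m] (x : m → ℝ) : ℝ :=
  Real.sqrt (x ⬝ᵥ x)

/-- `J` is the Jacobian of `f`. -/
def IsJacobianOf {n : ℕ} (J : (Fin n → ℝ) → Matrix (Fin n) (Fin n) ℝ)
    (f : (Fin n → ℝ) → (Fin n → ℝ)) : Prop :=
  ∀ x, HasFDerivAt f (LinearMap.toContinuousLinearMap ((J x).mulVecLin)) x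

/-- Auxiliary algebraic identity for symmetric `P`. -/
lemma aux_quad_identity {n : ℕ} (P J : Matrix (Fin n) (Fin n) ℝ) (hP : P.IsSymm)
    (v : Fin n → ℝ) :
    v ⬝ᵥ (Jᵀ * P + P * J).mulVec v = 2 * (J.mulVec v ⬝ᵥ P.mulVec v) := by
  rw [add_mulVec, dotProduct_add, ← mulVec_mulVec, ← mulVec_mulVec,
    dotProduct_mulVec v Jᵀ, vecMul_transpose, dotProduct_mulVec v P,
    ← transpose_transpose P, vecMul_transpose, transpose_transpose, hP.eq]
  ring_nf
  rw [dotProduct_comm]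
  ring

/-- distinct equilibria of a strictly dominant system (λ > 0) are
strictly separated by the quadratic form of P. -/
theorem distinct_equilibria_in_cone_interior {n : ℕ}
    (f : (Fin n → ℝ) → (Fin n → ℝ)) (J : (Fin n → ℝ) → Matrix (Fin n) (Fin n) ℝ)
    (hf : ContDiff ℝ 1 f) (hJ : IsJacobianOf J f)
    (P : Matrix (Fin n) (Fin n) ℝ) (hPsymm : P.IsSymm)
    (lam eps : ℝ) (hlam : 0 < lam) (heps : 0 < eps)
    (hLMI : ∀ x : Fin n → ℝ, matLE ((J x)ᵀ * P + P * J x)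
      (-((2 * lam) • P) - eps • (1 : Matrix (Fin n) (Fin n) ℝ)))
    (a b : Fin n → ℝ) (ha : f a = 0) (hb : f b = 0) (hab : a ≠ b) :
    quadForm P (a - b) ≤ -(eps / (2 * lam)) * ((a - b) ⬝ᵥ (a - b)) ∧
    -(eps / (2 * lam)) * ((a - b) ⬝ᵥ (a - b)) < 0 := by
  set v : Fin n → ℝ := a - b with hv_def
  have hv : v ≠ 0 := sub_ne_zero.mpr hab
  set w : Fin n → ℝ := P.mulVec v with hw_def
  set q : ℝ := v ⬝ᵥ P.mulVec v with hq_def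
  set s : ℝ := v ⬝ᵥ v with hs_def
  set C : ℝ := -(2 * lam) * q - eps * s with hC_def
  -- s > 0
  have hs_pos : 0 < s := by
    have h0 : s ≠ 0 := by
      simpa [hs_def, dotProduct_self_eq_zero] using hv
    have h1 : 0 ≤ s := by
      have : (0:ℝ) ≤ ∑ i, v i * v i :=
        Finset.sum_nonneg fun i _ => mul_self_nonneg _
      simpa [hs_def, dotProduct] using this
    exact lt_of_le_of_ne h1 (Ne.symm h0)
  -- key pointwise inequality from LMI
  have key : ∀ x : Fin n → ℝ, 2 * ((J x).mulVec v ⬝ᵥ w) ≤ C := by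
    intro x
    have h := (posSemidef_iff_dotProduct_mulVec.mp (hLMI x)).2 v
    rw [show (star v : Fin n → ℝ) = v from rfl] at h
    have hexp : v ⬝ᵥ ((-((2 * lam) • P) - eps • (1 : Matrix (Fin n) (Fin n) ℝ)
        - ((J x)ᵀ * P + P * J x)).mulVec v)
        = -(2 * lam) * q - eps * s - 2 * ((J x).mulVec v ⬝ᵥ w) := by
      rw [sub_mulVec, sub_mulVec, dotProduct_sub, dotProduct_sub,
        aux_quad_identity P (J x) hPsymm v]
      simp [neg_mulVec, smul_mulVec, one_mulVec, hq_def, hs_def, hw_def,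
        mul_assoc]
    rw [hexp] at h
    linarith [h]
  -- the dot-with-w continuous linear map
  set L : (Fin n → ℝ) →L[ℝ] ℝ :=
    LinearMap.toContinuousLinearMap
      { toFun := fun u => u ⬝ᵥ w
        map_add' := fun u u' => add_dotProduct u u' w
        map_smul' := fun c u => smul_dotProduct c u w } with hL_def
  have hL_apply : ∀ u, L u = u ⬝ᵥ w := fun u => rfl
  -- the path and the scalar function
  set γ : ℝ → (Fin n → ℝ) := fun t => b + t • v with hγ_def
  set g : ℝ → ℝ := fun t => 2 * (f (γ t) ⬝ᵥ w) with hg_def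
  have hγ' : ∀ t : ℝ, HasDerivAt γ v t := by
    intro t
    have : HasDerivAt (fun t : ℝ => t • v) v t := by
      simpa using (hasDerivAt_id t).smul_const v
    simpa [hγ_def] using this.const_add b
  have hg' : ∀ t : ℝ, HasDerivAt g (2 * ((J (γ t)).mulVec v ⬝ᵥ w)) t := by
    intro t
    have hF : HasDerivAt (fun t => f (γ t)) ((J (γ t)).mulVec v) t := by
      have := (hJ (γ t)).comp_hasDerivAt t (hγ' t)
      simpa [Function.comp_def] using this
    have hLg : HasDerivAt (fun t => L (f (γ t))) (L ((J (γ t)).mulVec v)) t :=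
      (L.hasFDerivAt.comp_hasDerivAt t hF)
    have := hLg.const_mul (2 : ℝ)
    simpa [hg_def, hL_apply, mul_comm] using this
  -- monotonicity of C*t - g t
  have hmono : Monotone (fun t : ℝ => C * t - g t) := by
    have hdiff : Differentiable ℝ (fun t : ℝ => C * t - g t) := by
      intro t
      exact (((hasDerivAt_id t).const_mul C).sub (hg' t)).differentiableAt
    apply monotone_of_deriv_nonneg hdiff
    intro t
    have hd : HasDerivAt (fun t : ℝ => C * t - g t)
        (C - 2 * ((J (γ t)).mulVec v ⬝ᵥ w)) t := by
      have h1 := ((hasDerivAt_id' t).const_mul C).sub (hg' t)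
      rw [mul_one] at h1
      exact h1
    rw [hd.deriv]
    linarith [key (γ t)]
  have hγ0 : γ 0 = b := by simp [hγ_def]
  have hγ1 : γ 1 = a := by simp [hγ_def, hv_def]
  have hg0 : g 0 = 0 := by simp [hg_def, hγ0, hb]
  have hg1 : g 1 = 0 := by simp [hg_def, hγ1, ha]
  have hC : 0 ≤ C := by
    have := hmono (show (0:ℝ) ≤ 1 by norm_num)
    simpa [hg0, hg1] using this
  -- conclude
  have hq : q ≤ -(eps / (2 * lam)) * s := by
    have h2lam : (0:ℝ) < 2 * lam := by linarith
    rw [neg_mul, le_neg, div_mul_eq_mul_div, div_le_iff₀ h2lam]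
    nlinarith [hC]
  constructor
  · simpa [quadForm, hq_def, hs_def] using hq
  · have : 0 < eps / (2 * lam) := div_pos heps (by linarith)
    have := mul_pos this hs_pos
    simpa [hs_def] using neg_neg_of_pos this
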